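/- Let v ≥ 2 and let Γ be an extremal graph of girth at least 5 on v vertices whose minimum degree δ satisfies δ = f(v) − f(v−1). Then for every vertex x of Γ of degree δ, the graph Γ − x obtained by deleting x and all edges on it is an extremal graph of girth at least 5 on v − 1 vertices, and the δ neighbours of x are pairwise at distance exactly 3 from each other in Γ − x. -/

import Mathlib

open SimpleGraph

/-- `Γ` has girth at least 5: every cycle has length at least 5. -/
def GirthAtLeast5 {V : Type*} (G : SimpleGraph V) : Prop :=
  ∀ ⦃u : V⦄ (w : G.Walk u u), w.IsCycle → 5 ≤ w.length

/-- `maxEdges v` is `f(v)`: the maximum number of edges of a simple graph on `v`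
vertices with girth at least 5. -/
noncomputable def maxEdges (v : ℕ) : ℕ :=
  sSup {e : ℕ | ∃ G : SimpleGraph (Fin v), GirthAtLeast5 G ∧ Nat.card G.edgeSet = e}

private lemma girth5_of_embedding {V W : Type*} {G : SimpleGraph V} {H : SimpleGraph W}
    (f : G ↪g H) (hH : GirthAtLeast5 H) : GirthAtLeast5 G := by
  intro u w hw
  have h1 : (w.map f.toHom).IsCycle :=
    (SimpleGraph.Walk.map_isCycle_iff_of_injective f.injective).mpr hw
  have := hH _ h1
  simpa [SimpleGraph.Walk.length_map] using this

private lemma girth5_bot {V : Type*} : GirthAtLeast5 (⊥ : SimpleGraph V) := by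
  intro u w hw
  cases w with
  | nil => exact absurd rfl hw.ne_nil
  | cons h p => exact h.elim

private lemma maxEdges_bddAbove (n : ℕ) :
    BddAbove {e : ℕ | ∃ G : SimpleGraph (Fin n), GirthAtLeast5 G ∧ Nat.card G.edgeSet = e} := by
  refine ⟨Nat.card (Sym2 (Fin n)), ?_⟩
  rintro m ⟨K, -, rfl⟩
  exact Nat.card_le_card_of_injective _ Subtype.val_injective

private lemma maxEdges_nonempty (n : ℕ) :
    Set.Nonempty {e : ℕ | ∃ G : SimpleGraph (Fin n), GirthAtLeast5 G ∧ Nat.card G.edgeSet = e} :=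
  ⟨0, ⊥, girth5_bot, by simp⟩

private lemma card_le_maxEdges {W : Type*} [Finite W] (H : SimpleGraph W) (n : ℕ)
    (hc : Nat.card W = n) (hg : GirthAtLeast5 H) :
    Nat.card H.edgeSet ≤ maxEdges n := by
  have e : W ≃ Fin n := Finite.equivFinOfCardEq hc
  have iso : (H.comap ⇑e.symm) ≃g H := Iso.comap e.symm H
  have h1 : GirthAtLeast5 (H.comap ⇑e.symm) := girth5_of_embedding iso.toEmbedding hg
  have h2 : Nat.card (H.comap ⇑e.symm).edgeSet = Nat.card H.edgeSet :=
    Nat.card_congr iso.mapEdgeSet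
  rw [← h2]
  exact le_csSup (maxEdges_bddAbove n) ⟨_, h1, rfl⟩

private lemma map_walk_pullback {W V : Type*} (f : W ↪ V) (G : SimpleGraph W)
    {a b : V} (w : (G.map f).Walk a b) :
    ∀ (a' b' : W) (ha : f a' = a) (hb : f b' = b),
      ∃ w' : G.Walk a' b',
        (w'.map (SimpleGraph.Embedding.map f G).toHom).copy ha hb = w := by
  induction w with
  | nil =>
    intro a' b' ha hb
    obtain rfl : a' = b' := f.injective (by rw [ha, hb])
    subst ha
    obtain rfl : (rfl : f a' = f a') = hb := rfl
    exact ⟨.nil, by simp⟩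
  | @cons u v b h p ih =>
    intro a' b' ha hb
    obtain ⟨c, d, hcd, hc, hd⟩ := (SimpleGraph.map_adj f G _ _).mp h
    obtain rfl : a' = c := f.injective (by rw [ha, hc])
    subst hc
    subst hd
    subst hb
    obtain ⟨p', hp'⟩ := ih d b' rfl rfl
    refine ⟨.cons hcd p', ?_⟩
    subst hp'
    rfl

private lemma girth5_map {W V : Type*} (f : W ↪ V) (G : SimpleGraph W)
    (hG : GirthAtLeast5 G) : GirthAtLeast5 (G.map f) := by
  intro u w hw
  cases w with
  | nil => exact absurd rfl hw.ne_nil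
  | @cons u v _ h p =>
    obtain ⟨c, d, hcd, hc, hd⟩ := (SimpleGraph.map_adj f G _ _).mp h
    obtain ⟨w', hw'⟩ := map_walk_pullback f G (Walk.cons h p) c c hc hc
    have hinj : Function.Injective ⇑(SimpleGraph.Embedding.map f G).toHom := f.injective
    have hcyc : w'.IsCycle := by
      rw [← hw'] at hw
      replace hw := (SimpleGraph.Walk.isCycle_copy _ _).mp hw
      exact (SimpleGraph.Walk.map_isCycle_iff_of_injective hinj).mp hw
    have := hG w' hcyc
    calc 5 ≤ w'.length := this
    _ = (Walk.cons h p).length := by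
        rw [← hw']; exact ((SimpleGraph.Walk.length_copy _ _ _).trans (SimpleGraph.Walk.length_map _ _)).symm

private lemma maxEdges_mono {m n : ℕ} (h : m ≤ n) : maxEdges m ≤ maxEdges n := by
  apply csSup_le (maxEdges_nonempty m)
  rintro e ⟨G, hG, rfl⟩
  set f : Fin m ↪ Fin n := (Fin.castLEEmb h) with hf
  have h1 : GirthAtLeast5 (G.map f) := girth5_map f G hG
  have h2 : Nat.card G.edgeSet ≤ Nat.card (G.map f).edgeSet :=
    Nat.card_le_card_of_injective _ (SimpleGraph.Embedding.map f G).mapEdgeSet.injective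
  exact h2.trans (le_csSup (maxEdges_bddAbove n) ⟨G.map f, h1, rfl⟩)

private lemma card_edge_split {V : Type*} [Fintype V] [DecidableEq V] (G : SimpleGraph V)
    [DecidableRel G.Adj] (x : V) :
    Nat.card G.edgeSet = Nat.card (G.induce {y : V | y ≠ x}).edgeSet + G.degree x := by
  set s : Set V := {y : V | y ≠ x} with hs
  have hsubset : G.incidenceSet x ⊆ G.edgeSet := G.incidenceSet_subset x
  have hsplit : (G.edgeSet \ G.incidenceSet x).ncard + (G.incidenceSet x).ncard
      = G.edgeSet.ncard := Set.ncard_diff_add_ncard_of_subset hsubset (Set.toFinite _)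
  have hdeg : (G.incidenceSet x).ncard = G.degree x := by
    rw [← G.card_incidenceSet_eq_degree (v := x), Set.ncard_eq_toFinset_card']
    exact Set.toFinset_card _
  have himg : G.edgeSet \ G.incidenceSet x
      = Sym2.map (Subtype.val : s → V) '' (G.induce s).edgeSet := by
    ext e
    induction e using Sym2.ind with
    | _ u v =>
      constructor
      · rintro ⟨he, hni⟩
        rw [mem_edgeSet] at he
        have hu : u ∈ s := fun h => hni (by
          rw [mk'_mem_incidenceSet_iff]; exact ⟨he, Or.inl h.symm⟩)
        have hv : v ∈ s := fun h => hni (by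
          rw [mk'_mem_incidenceSet_iff]; exact ⟨he, Or.inr h.symm⟩)
        refine ⟨s(⟨u, hu⟩, ⟨v, hv⟩), ?_, by simp⟩
        rw [mem_edgeSet]
        exact he
      · rintro ⟨e', he', heq⟩
        rw [← heq]
        clear heq
        induction e' using Sym2.ind with
        | _ p q =>
          have hadj : G.Adj p.val q.val := he'
          rw [Sym2.map_pair_eq]
          refine ⟨hadj, ?_⟩
          rw [mk'_mem_incidenceSet_iff]
          rintro ⟨-, h | h⟩
          · exact p.2 h.symm
          · exact q.2 h.symm
  have hinj : Function.Injective (Sym2.map (Subtype.val : s → V)) :=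
    Sym2.map.injective Subtype.val_injective
  rw [Nat.card_coe_set_eq, Nat.card_coe_set_eq, ← hsplit, himg,
    Set.ncard_image_of_injective _ hinj, hdeg]

theorem stmt2 {V : Type*} [Fintype V] (G : SimpleGraph V) [DecidableRel G.Adj]
    (v : ℕ) (hv : 2 ≤ v) (hcard : Fintype.card V = v)
    (hg : GirthAtLeast5 G)
    (hext : Nat.card G.edgeSet = maxEdges v)
    (hdelta : G.minDegree = maxEdges v - maxEdges (v - 1)) :
    ∀ x : V, G.degree x = G.minDegree →
      GirthAtLeast5 (G.induce {y : V | y ≠ x}) ∧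
      Nat.card (G.induce {y : V | y ≠ x}).edgeSet = maxEdges (v - 1) ∧
      ∀ (a b : V) (ha : G.Adj x a) (hb : G.Adj x b), a ≠ b →
        (G.induce {y : V | y ≠ x}).dist ⟨a, ha.ne'⟩ ⟨b, hb.ne'⟩ = 3 := by
  classical
  intro x hx
  set s : Set V := {y : V | y ≠ x} with hs
  set Gs : SimpleGraph s := G.induce s with hGsdef
  have hgirthGs : GirthAtLeast5 Gs := girth5_of_embedding (Embedding.induce s) hg
  have hns : Nat.card s = v - 1 := by
    have h1 : ({x} : Set V).ncard + ({x} : Set V)ᶜ.ncard = Nat.card V :=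
      Set.ncard_add_ncard_compl _ (Set.toFinite _) (Set.toFinite _)
    have h2 : s = ({x} : Set V)ᶜ := by ext y; simp [hs]
    rw [Nat.card_coe_set_eq, h2]
    rw [Set.ncard_singleton, Nat.card_eq_fintype_card, hcard] at h1
    omega
  have hleGs : Nat.card Gs.edgeSet ≤ maxEdges (v - 1) :=
    card_le_maxEdges Gs (v - 1) hns hgirthGs
  have hmono : maxEdges (v - 1) ≤ maxEdges v := maxEdges_mono (by omega)
  have hsplit : Nat.card G.edgeSet = Nat.card Gs.edgeSet + G.degree x := by
    letI := Classical.decEq V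
    exact card_edge_split G x
  have hdeg : G.degree x = maxEdges v - maxEdges (v - 1) := hx.trans hdelta
  have hcardGs : Nat.card Gs.edgeSet = maxEdges (v - 1) := by omega
  refine ⟨hgirthGs, hcardGs, ?_⟩
  intro a b ha hb hab
  set a' : s := ⟨a, ha.ne'⟩ with ha'
  set b' : s := ⟨b, hb.ne'⟩ with hb'
  have hab' : a' ≠ b' := by simpa [ha', hb', Subtype.ext_iff] using hab
  -- no adjacency (would give a triangle)
  have hnadj : ¬ Gs.Adj a' b' := by
    intro hadj
    have hGab : G.Adj a b := hadj
    have hcyc : (Walk.cons ha (Walk.cons hGab (Walk.cons hb.symm Walk.nil))).IsCycle := by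
      simp [Walk.isCycle_def, Walk.isTrail_def, ha.ne, ha.ne', hb.ne, hb.ne', hab,
        hGab.ne, Sym2.eq, Sym2.rel_iff']
    have := hg _ hcyc
    simp at this
  -- no common neighbour (would give a 4-cycle)
  have hnocommon : ∀ c' : s, ¬(Gs.Adj a' c' ∧ Gs.Adj c' b') := by
    rintro ⟨c, hc⟩ ⟨h1, h2⟩
    have hac : G.Adj a c := h1
    have hcb : G.Adj c b := h2
    have hcx : c ≠ x := hc
    have hcyc : (Walk.cons ha (Walk.cons hac (Walk.cons hcb (Walk.cons hb.symm
        Walk.nil)))).IsCycle := by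
      simp [Walk.isCycle_def, Walk.isTrail_def, ha.ne, ha.ne', hb.ne, hb.ne', hab,
        hac.ne, hcb.ne, hcx, Sym2.eq, Sym2.rel_iff']
      all_goals aesop
    have := hg _ hcyc
    simp at this
  clear_value a' b'
  -- key: a short walk exists
  have key : ∃ p : Gs.Walk a' b', p.length ≤ 3 := by
    by_contra hno
    push_neg at hno
    set G' : SimpleGraph s := Gs ⊔ SimpleGraph.edge a' b' with hG'def
    have hG'edges : G'.edgeSet = insert s(a', b') Gs.edgeSet := by
      rw [hG'def, edgeSet_sup, edge_edgeSet_of_ne hab', Set.union_singleton]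
    have hmemGs : ∀ {u1 u2 : s} (q : G'.Walk u1 u2), s(a', b') ∉ q.edges →
        ∀ e ∈ q.edges, e ∈ Gs.edgeSet := by
      intro u1 u2 q hq e he
      have h1 := q.edges_subset_edgeSet he
      rw [hG'edges, Set.mem_insert_iff] at h1
      rcases h1 with rfl | h1
      · exact absurd he hq
      · exact h1
    have hgirth' : GirthAtLeast5 G' := by
      intro u w hw
      by_cases he : s(a', b') ∈ w.edges
      · have hamem : a' ∈ w.support := w.fst_mem_support_of_mem_edges he
        set c := w.rotate a' hamem with hcdef
        have hcyc : c.IsCycle := hw.rotate hamem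
        have hce : s(a', b') ∈ c.edges := (w.rotate_edges a' hamem).mem_iff.mpr he
        have hbmem : b' ∈ c.support := c.snd_mem_support_of_mem_edges hce
        have hspec := c.take_spec hbmem
        set p1 := c.takeUntil b' hbmem with hp1def
        set p2 := c.dropUntil b' hbmem with hp2def
        have hlen : p1.length + p2.length = c.length := by
          rw [← Walk.length_append, hspec]
        have hlenw : c.length = w.length := by
          have := (w.rotate_edges a' hamem).perm.length_eq
          rw [hcdef, Walk.length_rotate]
        have hnodup : (p1.edges ++ p2.edges).Nodup := by
          rw [← Walk.edges_append, hspec]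
          exact hcyc.edges_nodup
        have hdisj := List.disjoint_of_nodup_append hnodup
        have hce' : s(a', b') ∈ p1.edges ++ p2.edges := by
          rw [← Walk.edges_append, hspec]; exact hce
        have hp1pos : p1.length ≠ 0 := fun h => hab' (Walk.eq_of_length_eq_zero h)
        have hp2pos : p2.length ≠ 0 := fun h => hab'.symm (Walk.eq_of_length_eq_zero h)
        rcases List.mem_append.mp hce' with h1 | h2
        · have hp2 : s(a', b') ∉ p2.edges := fun hmem => hdisj h1 hmem
          have hp2' : s(a', b') ∉ p2.reverse.edges := by
            rwa [Walk.edges_reverse, List.mem_reverse]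
          have hq := hmemGs p2.reverse hp2'
          have h4 : 3 < (p2.reverse.transfer Gs hq).length := hno _
          rw [Walk.length_transfer, Walk.length_reverse] at h4
          omega
        · have hp1 : s(a', b') ∉ p1.edges := fun hmem => hdisj hmem h2
          have hq := hmemGs p1 hp1
          have h4 : 3 < (p1.transfer Gs hq).length := hno _
          rw [Walk.length_transfer] at h4
          omega
      · have hq := hmemGs w he
        have := hgirthGs (w.transfer Gs hq) (hw.transfer hq)
        rwa [Walk.length_transfer] at this
    have hcard' : Nat.card G'.edgeSet ≤ maxEdges (v - 1) :=
      card_le_maxEdges G' (v - 1) hns hgirth'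
    have hnotmem : s(a', b') ∉ Gs.edgeSet := hnadj
    have hcount : Nat.card G'.edgeSet = Nat.card Gs.edgeSet + 1 := by
      rw [Nat.card_coe_set_eq, Nat.card_coe_set_eq, hG'edges,
        Set.ncard_insert_of_notMem hnotmem (Set.toFinite _)]
    omega
  obtain ⟨p, hp⟩ := key
  have hreach : Gs.Reachable a' b' := ⟨p⟩
  have hdle : Gs.dist a' b' ≤ 3 := (SimpleGraph.dist_le p).trans hp
  have hd0 : 0 < Gs.dist a' b' := hreach.pos_dist_of_ne hab'
  have hd1 : Gs.dist a' b' ≠ 1 := fun h => hnadj (SimpleGraph.dist_eq_one_iff_adj.mp h)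
  have hd2 : Gs.dist a' b' ≠ 2 := by
    intro h2
    obtain ⟨q, hq⟩ := hreach.exists_walk_length_eq_dist
    rw [h2] at hq
    cases q with
    | nil => simp at hq
    | cons hadj q' =>
      cases q' with
      | nil => simp at hq
      | cons hadj2 q'' =>
        cases q'' with
        | nil => exact hnocommon _ ⟨hadj, hadj2⟩
        | cons h3 q3 => simp at hq
  omega
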